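/- Let G_d = ΓΛΓ⁻¹ with Λ diagonal having strictly positive diagonal entries. For any 0 < ε < 1 there exists δ > 0 such that for all z, y ∈ ℝⁿ: if |ξ_{z,i}| ≤ δ|ξ_{y,i}| for all i = 1,…,n (where ξ_z = Γ⁻¹z, ξ_y = Γ⁻¹y), then ‖z‖_d ≤ ε‖y‖_d. -/

import Mathlib

open Matrix NormedSpace

noncomputable def dil {n : ℕ} (G : Matrix (Fin n) (Fin n) ℝ) (s : ℝ) :
    Matrix (Fin n) (Fin n) ℝ :=
  NormedSpace.exp (s • G)

noncomputable def wnorm {n : ℕ} (P : Matrix (Fin n) (Fin n) ℝ) (x : Fin n → ℝ) : ℝ :=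
  Real.sqrt (x ⬝ᵥ P.mulVec x)


lemma aux_mono {n : ℕ} (P Gd : Matrix (Fin n) (Fin n) ℝ)
    (hmon : (P * Gd + Gdᵀ * P).PosSemidef) (x : Fin n → ℝ) :
    Monotone (fun s : ℝ => (dil Gd s *ᵥ x) ⬝ᵥ P *ᵥ (dil Gd s *ᵥ x)) := by
  letI : SeminormedRing (Matrix (Fin n) (Fin n) ℝ) := Matrix.linftyOpSemiNormedRing
  letI : NormedRing (Matrix (Fin n) (Fin n) ℝ) := Matrix.linftyOpNormedRing
  letI : NormedAlgebra ℝ (Matrix (Fin n) (Fin n) ℝ) := Matrix.linftyOpNormedAlgebra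
  have hexp : ∀ t : ℝ, HasDerivAt (fun s : ℝ => NormedSpace.exp (s • Gd))
      (NormedSpace.exp (t • Gd) * Gd) t := fun t => hasDerivAt_exp_smul_const Gd t
  have hent : ∀ (t : ℝ) (i j : Fin n), HasDerivAt (fun s : ℝ => NormedSpace.exp (s • Gd) i j)
      ((NormedSpace.exp (t • Gd) * Gd) i j) t := by
    intro t i j
    exact ((Matrix.entryLinearMap ℝ ℝ i j).toContinuousLinearMap.hasFDerivAt.comp_hasDerivAt t (hexp t))
  have hv : ∀ (t : ℝ) (i : Fin n), HasDerivAt (fun s : ℝ => (NormedSpace.exp (s • Gd) *ᵥ x) i)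
      (((NormedSpace.exp (t • Gd) * Gd) *ᵥ x) i) t := by
    intro t i
    simp only [Matrix.mulVec, dotProduct]
    exact HasDerivAt.fun_sum fun j _ => (hent t i j).mul_const (x j)
  have hg : ∀ t : ℝ, HasDerivAt (fun s : ℝ => (dil Gd s *ᵥ x) ⬝ᵥ P *ᵥ (dil Gd s *ᵥ x))
      ((NormedSpace.exp (t • Gd) *ᵥ x) ⬝ᵥ ((Gdᵀ * P + P * Gd) *ᵥ (NormedSpace.exp (t • Gd) *ᵥ x))) t := by
    intro t
    have h1 : HasDerivAt (fun s : ℝ => (dil Gd s *ᵥ x) ⬝ᵥ P *ᵥ (dil Gd s *ᵥ x))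
        (∑ i, (((NormedSpace.exp (t • Gd) * Gd) *ᵥ x) i * (P *ᵥ (NormedSpace.exp (t • Gd) *ᵥ x)) i
          + (NormedSpace.exp (t • Gd) *ᵥ x) i * (P *ᵥ ((NormedSpace.exp (t • Gd) * Gd) *ᵥ x)) i)) t := by
      simp only [dil, dotProduct, Matrix.mulVec]
      refine HasDerivAt.fun_sum fun i _ => ?_
      have h2 : HasDerivAt (fun s : ℝ => ∑ j, P i j * (NormedSpace.exp (s • Gd) *ᵥ x) j)
          (∑ j, P i j * ((NormedSpace.exp (t • Gd) * Gd) *ᵥ x) j) t :=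
        HasDerivAt.fun_sum fun j _ => (hv t j).const_mul (P i j)
      have h3 := (hv t i).fun_mul h2
      simpa [Matrix.mulVec, dotProduct] using h3
    convert h1 using 1
    have hcomm : NormedSpace.exp (t • Gd) * Gd = Gd * NormedSpace.exp (t • Gd) :=
      (((Commute.refl Gd).smul_left t).exp_left).eq
    rw [hcomm, ← Matrix.mulVec_mulVec]
    set v := NormedSpace.exp (t • Gd) *ᵥ x with hvdef
    have e1 : ∑ i, ((Gd *ᵥ v) i * (P *ᵥ v) i + v i * (P *ᵥ (Gd *ᵥ v)) i)
        = (Gd *ᵥ v) ⬝ᵥ (P *ᵥ v) + v ⬝ᵥ (P *ᵥ (Gd *ᵥ v)) := by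
      simp [dotProduct, Finset.sum_add_distrib]
    rw [e1]
    have e2 : (Gd *ᵥ v) ⬝ᵥ (P *ᵥ v) = v ⬝ᵥ ((Gdᵀ * P) *ᵥ v) := by
      rw [← Matrix.mulVec_mulVec, Matrix.dotProduct_mulVec v, Matrix.vecMul_transpose,
        Matrix.dotProduct_mulVec]
    have e3 : v ⬝ᵥ (P *ᵥ (Gd *ᵥ v)) = v ⬝ᵥ ((P * Gd) *ᵥ v) := by
      rw [Matrix.mulVec_mulVec]
    rw [Matrix.add_mulVec, dotProduct_add, e2, e3]
  refine monotone_of_deriv_nonneg (fun t => (hg t).differentiableAt) (fun t => ?_)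
  rw [(hg t).deriv]
  have := hmon.dotProduct_mulVec_nonneg (NormedSpace.exp (t • Gd) *ᵥ x)
  rw [add_comm (P * Gd)] at this
  simpa using this

lemma quad_cont {n : ℕ} (M : Matrix (Fin n) (Fin n) ℝ) :
    Continuous (fun x : Fin n → ℝ => x ⬝ᵥ M *ᵥ x) := by
  simp only [dotProduct, Matrix.mulVec]
  exact continuous_finset_sum _ fun i _ => (continuous_apply i).mul
    (continuous_finset_sum _ fun j _ => continuous_const.mul (continuous_apply j))

lemma quad_smul {n : ℕ} (M : Matrix (Fin n) (Fin n) ℝ) (c : ℝ) (x : Fin n → ℝ) :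
    (c • x) ⬝ᵥ M *ᵥ (c • x) = c ^ 2 * (x ⬝ᵥ M *ᵥ x) := by
  rw [Matrix.mulVec_smul, smul_dotProduct, dotProduct_smul]
  ring_nf

lemma quad_lower {n : ℕ} (M : Matrix (Fin n) (Fin n) ℝ)
    (hpos : ∀ x : Fin n → ℝ, x ≠ 0 → 0 < x ⬝ᵥ M *ᵥ x) :
    ∃ m : ℝ, 0 < m ∧ ∀ x : Fin n → ℝ, m * (∑ i, x i ^ 2) ≤ x ⬝ᵥ M *ᵥ x := by
  by_cases hn : ∀ x : Fin n → ℝ, x = 0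
  · exact ⟨1, one_pos, fun x => by rw [hn x]; simp⟩
  push_neg at hn
  obtain ⟨x₁, hx₁⟩ := hn
  set S : Set (Fin n → ℝ) := {x | ∑ i, x i ^ 2 = 1} with hS
  have hNcont : Continuous (fun x : Fin n → ℝ => ∑ i, x i ^ 2) :=
    continuous_finset_sum _ fun i _ => (continuous_apply i).pow 2
  have hclosed : IsClosed S := isClosed_eq hNcont continuous_const
  have hsq_le : ∀ (x : Fin n → ℝ) (i : Fin n), x i ^ 2 ≤ ∑ j, x j ^ 2 := fun x i =>
    Finset.single_le_sum (fun j _ => sq_nonneg (x j)) (Finset.mem_univ i)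
  have hbdd : Bornology.IsBounded S := by
    rw [Metric.isBounded_iff_subset_closedBall 0]
    refine ⟨1, fun x hx => ?_⟩
    simp only [Metric.mem_closedBall, dist_zero_right]
    rw [pi_norm_le_iff_of_nonneg zero_le_one]
    intro i
    rw [Real.norm_eq_abs]
    nlinarith [hsq_le x i, hx.out, abs_nonneg (x i), sq_abs (x i)]
  have hcpt : IsCompact S := Metric.isCompact_of_isClosed_isBounded hclosed hbdd
  have hne : S.Nonempty := by
    have hN1 : 0 < ∑ i, x₁ i ^ 2 := by
      obtain ⟨i, hi⟩ := Function.ne_iff.mp hx₁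
      exact Finset.sum_pos' (fun j _ => sq_nonneg _) ⟨i, Finset.mem_univ i, pow_two_pos_of_ne_zero hi⟩
    refine ⟨(Real.sqrt (∑ i, x₁ i ^ 2))⁻¹ • x₁, ?_⟩
    have hs : Real.sqrt (∑ i, x₁ i ^ 2) ≠ 0 := (Real.sqrt_pos.mpr hN1).ne'
    simp only [hS, Set.mem_setOf_eq, Pi.smul_apply, smul_eq_mul, mul_pow, ← Finset.mul_sum]
    rw [inv_pow, Real.sq_sqrt hN1.le, inv_mul_cancel₀ hN1.ne']
  obtain ⟨x₀, hx₀S, hmin'⟩ := hcpt.exists_isMinOn hne (quad_cont M).continuousOn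
  have hmin : ∀ y ∈ S, x₀ ⬝ᵥ M *ᵥ x₀ ≤ y ⬝ᵥ M *ᵥ y := fun y hy => hmin' hy
  have hx₀ne : x₀ ≠ 0 := by
    intro h
    rw [h] at hx₀S
    simp [hS, Set.mem_setOf_eq] at hx₀S
  refine ⟨x₀ ⬝ᵥ M *ᵥ x₀, hpos x₀ hx₀ne, fun x => ?_⟩
  by_cases hx : x = 0
  · simp [hx]
  have hNx : 0 < ∑ i, x i ^ 2 := by
    obtain ⟨i, hi⟩ := Function.ne_iff.mp hx
    exact Finset.sum_pos' (fun j _ => sq_nonneg _) ⟨i, Finset.mem_univ i, pow_two_pos_of_ne_zero hi⟩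
  set t := Real.sqrt (∑ i, x i ^ 2) with ht
  have htpos : 0 < t := Real.sqrt_pos.mpr hNx
  have hu : (t⁻¹ • x) ∈ S := by
    simp only [hS, Set.mem_setOf_eq, Pi.smul_apply, smul_eq_mul, mul_pow, ← Finset.mul_sum]
    rw [inv_pow, ht, Real.sq_sqrt hNx.le, inv_mul_cancel₀ hNx.ne']
  have h1 := hmin _ hu
  have h2 : (t⁻¹ • x) ⬝ᵥ M *ᵥ (t⁻¹ • x) = t⁻¹ ^ 2 * (x ⬝ᵥ M *ᵥ x) := quad_smul M t⁻¹ x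
  rw [h2] at h1
  have ht2 : t ^ 2 = ∑ i, x i ^ 2 := Real.sq_sqrt hNx.le
  calc (x₀ ⬝ᵥ M *ᵥ x₀) * (∑ i, x i ^ 2) = (x₀ ⬝ᵥ M *ᵥ x₀) * t ^ 2 := by rw [ht2]
    _ ≤ (t⁻¹ ^ 2 * (x ⬝ᵥ M *ᵥ x)) * t ^ 2 := by nlinarith [sq_nonneg t]
    _ = x ⬝ᵥ M *ᵥ x := by field_simp

set_option maxHeartbeats 1000000 in
/-- Lemma 1: `G_d = ΓΛΓ⁻¹`, `Λ` diagonal with positive entries. For any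
`0 < ε < 1` there is `δ > 0` such that `|ξ_{z,i}| ≤ δ|ξ_{y,i}|` for all `i` (with
`ξ_z = Γ⁻¹z`, `ξ_y = Γ⁻¹y`) implies `‖z‖_d ≤ ε‖y‖_d`. -/
theorem stmt8 {n : ℕ} (P Gd Γ Λ : Matrix (Fin n) (Fin n) ℝ) (hP : P.PosDef)
    (hmon : (P * Gd + Gdᵀ * P).PosDef)
    (hΓ : IsUnit Γ.det) (hfac : Gd = Γ * Λ * Γ⁻¹)
    (hΛdiag : ∀ i j : Fin n, i ≠ j → Λ i j = 0) (hΛpos : ∀ i : Fin n, 0 < Λ i i)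
    (hnd : (Fin n → ℝ) → ℝ) (hnd0 : hnd 0 = 0)
    (hndpos : ∀ x : Fin n → ℝ, x ≠ 0 → 0 < hnd x)
    (hnddef : ∀ x : Fin n → ℝ, x ≠ 0 → wnorm P (dil Gd (-(Real.log (hnd x))) *ᵥ x) = 1) :
    ∀ ε : ℝ, 0 < ε → ε < 1 → ∃ δ : ℝ, 0 < δ ∧ ∀ z y : Fin n → ℝ,
      (∀ i : Fin n, |(Γ⁻¹ *ᵥ z) i| ≤ δ * |(Γ⁻¹ *ᵥ y) i|) → hnd z ≤ ε * hnd y := by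
  intro ε hε0 hε1
  have hΓu : IsUnit Γ := (Matrix.isUnit_iff_isUnit_det Γ).mpr hΓ
  -- recover vectors from their ξ coordinates
  have hrec : ∀ z : Fin n → ℝ, Γ *ᵥ (Γ⁻¹ *ᵥ z) = z := by
    intro z
    rw [Matrix.mulVec_mulVec, Matrix.mul_nonsing_inv Γ hΓ, Matrix.one_mulVec]
  -- dilation in diagonal form, applied to vectors
  have hdil : ∀ s : ℝ, dil Gd s = Γ * Matrix.diagonal (fun i => Real.exp (s * Λ i i)) * Γ⁻¹ := by
    intro s
    have h1 : s • Gd = Γ * Matrix.diagonal (fun i => s * Λ i i) * Γ⁻¹ := by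
      rw [hfac, ← smul_mul_assoc, ← mul_smul_comm]
      congr 2
      ext i j
      by_cases h : i = j
      · subst h; simp [Matrix.diagonal]
      · simp [Matrix.diagonal_apply_ne _ h, hΛdiag i j h]
    rw [dil, h1, Matrix.exp_conj Γ _ hΓu, Matrix.exp_diagonal]
    have hexpv : (exp (fun i => s * Λ i i) : Fin n → ℝ) = fun i => Real.exp (s * Λ i i) := by
      funext i
      rw [Pi.coe_exp, ← Real.exp_eq_exp_ℝ]
    rw [hexpv]
  have happ : ∀ (s : ℝ) (z : Fin n → ℝ),
      dil Gd s *ᵥ z = Γ *ᵥ (fun i => Real.exp (s * Λ i i) * (Γ⁻¹ *ᵥ z) i) := by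
    intro s z
    rw [hdil, ← Matrix.mulVec_mulVec, ← Matrix.mulVec_mulVec]
    refine congrArg (fun w => Γ *ᵥ w) ?_
    funext i
    exact Matrix.mulVec_diagonal _ _ i
  -- the congruent quadratic form
  set M : Matrix (Fin n) (Fin n) ℝ := Γᵀ * P * Γ with hM
  have hcongr : ∀ u : Fin n → ℝ, (Γ *ᵥ u) ⬝ᵥ P *ᵥ (Γ *ᵥ u) = u ⬝ᵥ M *ᵥ u := by
    intro u
    rw [hM, ← Matrix.mulVec_mulVec, ← Matrix.mulVec_mulVec, Matrix.dotProduct_mulVec u,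
      Matrix.vecMul_transpose, Matrix.dotProduct_mulVec (Γ *ᵥ u)]
  have hMpos : ∀ u : Fin n → ℝ, u ≠ 0 → 0 < u ⬝ᵥ M *ᵥ u := by
    intro u hu
    have hΓu0 : Γ *ᵥ u ≠ 0 := by
      intro h
      apply hu
      have := congrArg (fun w => Γ⁻¹ *ᵥ w) h
      simpa [Matrix.mulVec_mulVec, Matrix.nonsing_inv_mul Γ hΓ, Matrix.one_mulVec] using this
    have := hP.dotProduct_mulVec_pos hΓu0
    rw [← hcongr u]
    simpa using this
  obtain ⟨m, hm0, hmle⟩ := quad_lower M hMpos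
  -- the squared-norm value at the homogeneous-norm scaling is 1
  have hval : ∀ x : Fin n → ℝ, x ≠ 0 →
      (dil Gd (-(Real.log (hnd x))) *ᵥ x) ⬝ᵥ P *ᵥ (dil Gd (-(Real.log (hnd x))) *ᵥ x) = 1 := by
    intro x hx
    exact Real.sqrt_eq_one.mp (hnddef x hx)
  -- constants
  set K : ℝ := ∑ i, ∑ j, |M i j| with hK
  have hK0 : 0 ≤ K := Finset.sum_nonneg fun i _ => Finset.sum_nonneg fun j _ => abs_nonneg _
  set A : ℝ := 1 + ∑ i, Real.exp (-Real.log ε * Λ i i) with hA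
  have hA1 : 1 ≤ A := le_add_of_nonneg_right (Finset.sum_nonneg fun i _ => (Real.exp_pos _).le)
  have hA0 : 0 < A := lt_of_lt_of_le one_pos hA1
  have hAi : ∀ i, Real.exp (-Real.log ε * Λ i i) ≤ A := by
    intro i
    have := Finset.single_le_sum (f := fun j => Real.exp (-Real.log ε * Λ j j))
      (fun j _ => (Real.exp_pos _).le) (Finset.mem_univ i)
    rw [hA]; linarith
  have hmK : 0 < m + K := by linarith
  set δ : ℝ := Real.sqrt (m / (m + K)) / (2 * A) with hδdef
  have hδ0 : 0 < δ := by
    apply div_pos (Real.sqrt_pos.mpr (div_pos hm0 hmK))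
    linarith
  refine ⟨δ, hδ0, fun z y hle => ?_⟩
  by_cases hy : y = 0
  · have hz : z = 0 := by
      have hξz : (Γ⁻¹ *ᵥ z) = 0 := by
        funext i
        have := hle i
        rw [hy, Matrix.mulVec_zero] at this
        simpa using abs_nonpos_iff.mp (by simpa using this)
      rw [← hrec z, hξz, Matrix.mulVec_zero]
    rw [hz, hy, hnd0]
    simp
  by_cases hz : z = 0
  · rw [hz, hnd0]
    exact le_of_lt (mul_pos hε0 (hndpos y hy))
  -- main case
  set Y : ℝ := hnd y with hYdef
  have hY0 : 0 < Y := hndpos y hy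
  have hr0 : 0 < ε * Y := mul_pos hε0 hY0
  have hlogr : Real.log (ε * Y) = Real.log ε + Real.log Y := Real.log_mul hε0.ne' hY0.ne'
  set η : Fin n → ℝ := fun i => Real.exp (-Real.log Y * Λ i i) * (Γ⁻¹ *ᵥ y) i with hηdef
  set u : Fin n → ℝ := fun i => Real.exp (-Real.log (ε * Y) * Λ i i) * (Γ⁻¹ *ᵥ z) i with hudef
  have hηM : η ⬝ᵥ M *ᵥ η = 1 := by
    have := hval y hy
    rw [happ, hcongr] at this
    convert this using 2
  have hηsum : ∑ i, η i ^ 2 ≤ 1 / m := by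
    have := hmle η
    rw [hηM] at this
    rw [le_div_iff₀ hm0]
    linarith
  have hηη : ∀ i j, |η i| * |η j| ≤ 1 / m := by
    intro i j
    have hi := (Finset.single_le_sum (f := fun k => η k ^ 2)
      (fun k _ => sq_nonneg _) (Finset.mem_univ i)).trans hηsum
    have hj := (Finset.single_le_sum (f := fun k => η k ^ 2)
      (fun k _ => sq_nonneg _) (Finset.mem_univ j)).trans hηsum
    nlinarith [sq_abs (η i), sq_abs (η j), abs_nonneg (η i), abs_nonneg (η j), sq_nonneg (|η i| - |η j|)]
  have hub : ∀ i, |u i| ≤ (δ * A) * |η i| := by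
    intro i
    have hsplit : -Real.log (ε * Y) * Λ i i = -Real.log ε * Λ i i + -Real.log Y * Λ i i := by
      rw [hlogr]; ring
    have h1 : |u i| = Real.exp (-Real.log ε * Λ i i) * (Real.exp (-Real.log Y * Λ i i) * |(Γ⁻¹ *ᵥ z) i|) := by
      rw [hudef]
      simp only []
      rw [hsplit, Real.exp_add, abs_mul, abs_mul, abs_of_pos (Real.exp_pos _), abs_of_pos (Real.exp_pos _)]
      ring
    have h2 : |η i| = Real.exp (-Real.log Y * Λ i i) * |(Γ⁻¹ *ᵥ y) i| := by
      rw [hηdef]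
      simp only []
      rw [abs_mul, abs_of_pos (Real.exp_pos _)]
    rw [h1, h2]
    have he2 : 0 < Real.exp (-Real.log Y * Λ i i) := Real.exp_pos _
    calc Real.exp (-Real.log ε * Λ i i) * (Real.exp (-Real.log Y * Λ i i) * |(Γ⁻¹ *ᵥ z) i|)
        ≤ Real.exp (-Real.log ε * Λ i i) * (Real.exp (-Real.log Y * Λ i i) * (δ * |(Γ⁻¹ *ᵥ y) i|)) := by
          have := hle i
          have h3 : (0:ℝ) ≤ Real.exp (-Real.log ε * Λ i i) * Real.exp (-Real.log Y * Λ i i) := by positivity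
          nlinarith [Real.exp_pos (-Real.log ε * Λ i i), Real.exp_pos (-Real.log Y * Λ i i)]
      _ ≤ A * (Real.exp (-Real.log Y * Λ i i) * (δ * |(Γ⁻¹ *ᵥ y) i|)) := by
          have h4 : 0 ≤ Real.exp (-Real.log Y * Λ i i) * (δ * |(Γ⁻¹ *ᵥ y) i|) := by positivity
          exact mul_le_mul_of_nonneg_right (hAi i) h4
      _ = (δ * A) * (Real.exp (-Real.log Y * Λ i i) * |(Γ⁻¹ *ᵥ y) i|) := by ring
  -- the key quadratic bound
  have hδA : (δ * A) ^ 2 = m / (m + K) / 4 := by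
    have : δ * A = Real.sqrt (m / (m + K)) / 2 := by
      rw [hδdef]; field_simp
    rw [this, div_pow, Real.sq_sqrt (by positivity : (0:ℝ) ≤ m / (m + K))]
    norm_num
  have hbound : u ⬝ᵥ M *ᵥ u < 1 := by
    have step1 : u ⬝ᵥ M *ᵥ u ≤ ∑ i, ∑ j, (δ * A) ^ 2 * (1 / m) * |M i j| := by
      simp only [dotProduct, Matrix.mulVec]
      calc ∑ i, u i * ∑ j, M i j * u j = ∑ i, ∑ j, u i * (M i j * u j) := by
            refine Finset.sum_congr rfl fun i _ => ?_
            rw [Finset.mul_sum]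
        _ ≤ ∑ i, ∑ j, (δ * A) ^ 2 * (1 / m) * |M i j| := by
            refine Finset.sum_le_sum fun i _ => Finset.sum_le_sum fun j _ => ?_
            have t1 : u i * (M i j * u j) ≤ |u i| * |u j| * |M i j| := by
              calc u i * (M i j * u j) ≤ |u i * (M i j * u j)| := le_abs_self _
                _ = |u i| * |u j| * |M i j| := by simp only [abs_mul]; ring
            have t2 : |u i| * |u j| ≤ (δ * A) ^ 2 * (1 / m) := by
              have hδA0 : 0 ≤ δ * A := by positivity
              have b := mul_le_mul (hub i) (hub j) (abs_nonneg _) (by positivity)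
              have b2 : (δ * A * |η i|) * (δ * A * |η j|) = (δ * A) ^ 2 * (|η i| * |η j|) := by ring
              rw [b2] at b
              calc |u i| * |u j| ≤ (δ * A) ^ 2 * (|η i| * |η j|) := b
                _ ≤ (δ * A) ^ 2 * (1 / m) := by
                    exact mul_le_mul_of_nonneg_left (hηη i j) (by positivity)
            calc u i * (M i j * u j) ≤ |u i| * |u j| * |M i j| := t1
              _ ≤ (δ * A) ^ 2 * (1 / m) * |M i j| :=
                  mul_le_mul_of_nonneg_right t2 (abs_nonneg _)
    have step2 : ∑ i, ∑ j, (δ * A) ^ 2 * (1 / m) * |M i j| = (δ * A) ^ 2 * (1 / m) * K := by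
      rw [hK, Finset.mul_sum]
      exact Finset.sum_congr rfl fun i _ => by rw [Finset.mul_sum]
    have step3 : (δ * A) ^ 2 * (1 / m) * K < 1 := by
      rw [hδA]
      have : m / (m + K) / 4 * (1 / m) * K = K / (4 * (m + K)) := by
        field_simp
      rw [this]
      rw [div_lt_one (by positivity)]
      linarith
    calc u ⬝ᵥ M *ᵥ u ≤ (δ * A) ^ 2 * (1 / m) * K := step1.trans_eq step2
      _ < 1 := step3
  -- conclude via monotonicity
  by_contra hcon
  push_neg at hcon
  have hzY : ε * Y < hnd z := hcon
  have hlog : -Real.log (hnd z) ≤ -Real.log (ε * Y) := by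
    have := Real.log_le_log hr0 hzY.le
    linarith
  have hmono := aux_mono P Gd hmon.posSemidef z hlog
  have h1 : (dil Gd (-Real.log (hnd z)) *ᵥ z) ⬝ᵥ P *ᵥ (dil Gd (-Real.log (hnd z)) *ᵥ z) = 1 :=
    hval z hz
  have h2 : (dil Gd (-Real.log (ε * Y)) *ᵥ z) ⬝ᵥ P *ᵥ (dil Gd (-Real.log (ε * Y)) *ᵥ z) < 1 := by
    rw [happ, hcongr]
    exact hbound
  simp only [] at hmono
  rw [h1, ] at hmono
  linarith [hmono, h2]
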